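/- For each i with 2 ≤ i ≤ m and every integer r > 0, the word length of φ^r(a_i) in F equals Σ_{j=0}^{i-1} C(r, j), and the word length of φ^{-r}(a_i) in F equals Σ_{j=0}^{i-1} C(r+j-1, j), where C(n, k) denotes the binomial coefficient (with C(r, j) interpreted as 0 when j > r). -/

import Mathlib

open FreeGroup SemidirectProduct

/-- Words on the letters `a₁^{±1}, …, a_m^{±1}` (`(i, true)` is `a_{i+1}`,
`(i, false)` is `a_{i+1}⁻¹`, with 0-based `Fin`-indexing of the generators). -/
abbrev FWord (m : ℕ) := List (Fin m × Bool)

/-- A word is freely reduced. -/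
def Reduced {m : ℕ} (w : FWord m) : Prop := FreeGroup.reduce w = w

/-- `φ` is the automorphism of `F = F(a₁, …, a_m)` with `φ(a₁) = a₁` and
`φ(aᵢ) = aᵢ aᵢ₋₁` for `2 ≤ i ≤ m`. -/
def IsHydraAut (m : ℕ) (φ : FreeGroup (Fin m) ≃* FreeGroup (Fin m)) : Prop :=
  ∀ i : Fin m, φ (FreeGroup.of i) =
    if i.val = 0 then FreeGroup.of i
    else FreeGroup.of i *
      FreeGroup.of (⟨i.val - 1, Nat.lt_of_le_of_lt (Nat.sub_le _ _) i.isLt⟩ : Fin m)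

/-- The free-by-cyclic group `H_m = F ⋊_φ ℤ`; here `s = inr (ofAdd 1)` and the defining
relation `s⁻¹ aᵢ s = φ(aᵢ)` holds.  The normal form `ũ s^p` is the element
`⟨ũ, Multiplicative.ofAdd p⟩`. -/
abbrev Hgrp (m : ℕ) (φ : FreeGroup (Fin m) ≃* FreeGroup (Fin m)) :=
  FreeGroup (Fin m) ⋊[zpowersHom (MulAut (FreeGroup (Fin m))) φ⁻¹] Multiplicative ℤ

/-- Letters of words over the generators of `H_m`: `some i` is `a_{i+1}`, `none` is `s`. -/
abbrev HWord (m : ℕ) := List (Option (Fin m) × Bool)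

def hLetter {m : ℕ} (φ : FreeGroup (Fin m) ≃* FreeGroup (Fin m)) (x : Option (Fin m) × Bool) :
    Hgrp m φ :=
  match x.1 with
  | some i => cond x.2 (SemidirectProduct.inl (FreeGroup.of i))
      (SemidirectProduct.inl (FreeGroup.of i))⁻¹
  | none => cond x.2 (SemidirectProduct.inr (Multiplicative.ofAdd (1:ℤ)))
      (SemidirectProduct.inr (Multiplicative.ofAdd (1:ℤ)))⁻¹

/-- The element of `H_m` represented by a word on `a₁^{±1}, …, a_m^{±1}, s^{±1}`. -/
def evalH {m : ℕ} (φ : FreeGroup (Fin m) ≃* FreeGroup (Fin m)) (w : HWord m) : Hgrp m φ :=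
  (w.map (hLetter φ)).prod

/-- Word length in `H_m` w.r.t. the generating set `{a₁, …, a_m, s}`. -/
noncomputable def lenH {m : ℕ} (φ : FreeGroup (Fin m) ≃* FreeGroup (Fin m)) (g : Hgrp m φ) : ℕ :=
  sInf {n | ∃ w : HWord m, evalH φ w = g ∧ w.length = n}

/-- Word length in `F` w.r.t. the generating set `{a₁, …, a_m}`. -/
noncomputable def lenF {m : ℕ} (g : FreeGroup (Fin m)) : ℕ :=
  sInf {n | ∃ w : FWord m, FreeGroup.mk w = g ∧ w.length = n}

/-- The rank of a word: the maximal `i` such that `aᵢ^{±1}` occurs in it (a letter with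
`Fin`-index `j` is `a_{j+1}`, so it contributes `j+1`); the empty word has rank `0`. -/
def wrank {m : ℕ} (w : FWord m) : ℕ := (w.map (fun x => x.1.val + 1)).foldr max 0

/-- The four types of rank-`i` pieces: `aᵢ u`, `u aᵢ⁻¹`, `aᵢ u aᵢ⁻¹`, `u`. -/
inductive PieceType | head | tail | both | plain
deriving DecidableEq

/-- `π` is a rank-`i` piece of the given type: `aᵢ u`, `u aᵢ⁻¹`, `aᵢ u aᵢ⁻¹` or `u`,
where `u` is a (possibly empty) word of rank at most `i - 1`.  Pieces of the first three
types have strict rank `i`. -/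
def IsPieceType {m : ℕ} (i : ℕ) (t : PieceType) (π : FWord m) : Prop :=
  match t with
  | .head => ∃ (x : Fin m × Bool) (u : FWord m),
      π = x :: u ∧ x.1.val + 1 = i ∧ x.2 = true ∧ wrank u < i
  | .tail => ∃ (x : Fin m × Bool) (u : FWord m),
      π = u ++ [x] ∧ x.1.val + 1 = i ∧ x.2 = false ∧ wrank u < i
  | .both => ∃ (j : Fin m) (u : FWord m),
      π = (j, true) :: (u ++ [(j, false)]) ∧ j.val + 1 = i ∧ wrank u < i
  | .plain => wrank π < i

def IsPiece {m : ℕ} (i : ℕ) (π : FWord m) : Prop := ∃ t, IsPieceType i t π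

/-- The rank-`i` piece decomposition of `w`: a decomposition into rank-`i` pieces
with the minimal possible number of pieces. -/
def IsPieceDecomp {m : ℕ} (i : ℕ) (w : FWord m) (L : List (FWord m)) : Prop :=
  L.flatten = w ∧ (∀ π ∈ L, IsPiece i π) ∧
    ∀ L' : List (FWord m), L'.flatten = w → (∀ π ∈ L', IsPiece i π) → L.length ≤ L'.length

/-- The number of pieces in the rank-`i` decomposition of `w`, for `i = wrank w`. -/
noncomputable def piecesCount {m : ℕ} (w : FWord m) : ℕ :=
  sInf {p | ∃ L : List (FWord m),
    L.flatten = w ∧ (∀ π ∈ L, IsPiece (wrank w) π) ∧ L.length = p}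

/-- The number of pieces of an element of the free group. -/
noncomputable def piecesCountF {m : ℕ} (g : FreeGroup (Fin m)) : ℕ :=
  piecesCount (FreeGroup.toWord g)

namespace HydraAux


abbrev R {m : ℕ} (a b : Fin m × Bool) : Prop := a.1 = b.1 → a.2 = b.2

def gen (m : ℕ) (hm : 0 < m) (k : ℕ) : Fin m := ⟨k % m, Nat.mod_lt _ hm⟩

lemma gen_val {m : ℕ} (hm : 0 < m) {k : ℕ} (h : k < m) : (gen m hm k).val = k :=
  Nat.mod_eq_of_lt h

lemma gen_ne {m : ℕ} (hm : 0 < m) {k l : ℕ} (hk : k < m) (hl : l < m) (h : k ≠ l) :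
    gen m hm k ≠ gen m hm l := by
  intro he
  apply h
  have := congrArg Fin.val he
  rwa [gen_val hm hk, gen_val hm hl] at this

def posW (m : ℕ) (hm : 0 < m) : ℕ → ℕ → FWord m
  | 0, k => [(gen m hm k, true)]
  | _ + 1, 0 => [(gen m hm 0, true)]
  | r + 1, k + 1 => posW m hm r (k + 1) ++ posW m hm r k

def negW (m : ℕ) (hm : 0 < m) : ℕ → ℕ → FWord m
  | 0, k => [(gen m hm k, true)]
  | _ + 1, 0 => [(gen m hm 0, true)]
  | r + 1, k + 1 => negW m hm r (k + 1) ++ FreeGroup.invRev (negW m hm (r + 1) k)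
  termination_by r k => (r, k)

lemma negW_zero' {m : ℕ} (hm : 0 < m) (r : ℕ) : negW m hm r 0 = [(gen m hm 0, true)] := by
  cases r <;> simp [negW]



lemma reduce_eq_self_of_chain {α : Type*} [DecidableEq α] :
    ∀ w : List (α × Bool), w.Chain' (fun a b => a.1 = b.1 → a.2 = b.2) →
      FreeGroup.reduce w = w := by
  intro w
  induction w with
  | nil => intro _; rfl
  | cons x l ih =>
    intro h
    have hl : FreeGroup.reduce l = l := ih h.tail
    rw [FreeGroup.reduce.cons, hl]
    cases l with
    | nil => rfl
    | cons y t =>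
      have hxy : x.1 = y.1 → x.2 = y.2 := (List.isChain_cons_cons.mp h).1
      simp only
      rw [if_neg]
      rintro ⟨h1, h2⟩
      have := hxy h1
      rw [this] at h2
      simp at h2


lemma lenF_mk_of_reduced {m : ℕ} (w : FWord m) (hw : FreeGroup.reduce w = w) :
    lenF (FreeGroup.mk w) = w.length := by
  apply le_antisymm
  · have : w.length ∈ {n | ∃ w' : FWord m, FreeGroup.mk w' = FreeGroup.mk w ∧ w'.length = n} :=
      ⟨w, rfl, rfl⟩
    exact Nat.sInf_le this
  · have hne : {n | ∃ w' : FWord m, FreeGroup.mk w' = FreeGroup.mk w ∧ w'.length = n}.Nonempty :=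
      ⟨w.length, w, rfl, rfl⟩
    apply le_csInf hne
    rintro n ⟨v, hv, rfl⟩
    have h1 : FreeGroup.reduce v = FreeGroup.reduce w := by
      have := congrArg FreeGroup.toWord hv
      rwa [FreeGroup.toWord_mk, FreeGroup.toWord_mk] at this
    calc w.length = (FreeGroup.reduce v).length := by rw [h1, hw]
    _ ≤ v.length := (FreeGroup.reduce.red).length_le

lemma posW_length (m : ℕ) (hm : 0 < m) :
    ∀ r k, (posW m hm r k).length = ∑ j ∈ Finset.range (k + 1), r.choose j := by
  intro r
  induction r with
  | zero =>
    intro k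
    show (1:ℕ) = _
    induction k with
    | zero => simp
    | succ k ihk =>
      rw [Finset.sum_range_succ, Nat.choose_eq_zero_of_lt (by omega)]
      omega
  | succ r ih =>
    intro k
    cases k with
    | zero => simp [posW]
    | succ k =>
      rw [posW, List.length_append, ih, ih]
      rw [Finset.sum_range_succ' (fun j => (r+1).choose j), Nat.choose_zero_right]
      rw [Finset.sum_range_succ' (fun j => r.choose j) (k+1), Nat.choose_zero_right]
      simp only [Nat.choose_succ_succ, Nat.succ_eq_add_one, Finset.sum_add_distrib]
      omega

lemma negW_length (m : ℕ) (hm : 0 < m) :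
    ∀ r k, (negW m hm r k).length = (r + k).choose k := by
  intro r
  induction r with
  | zero => intro k; simp [negW]
  | succ r ih =>
    intro k
    induction k with
    | zero => simp [negW]
    | succ k ihk =>
      rw [negW, List.length_append, FreeGroup.invRev_length, ih, ihk]
      have e : r + 1 + k = r + (k + 1) := by omega
      have e2 : r + 1 + (k + 1) = (r + (k + 1)) + 1 := by omega
      rw [e, e2, Nat.choose_succ_succ, Nat.succ_eq_add_one]
      exact Nat.add_comm _ _


lemma posW_true {m : ℕ} (hm : 0 < m) :
    ∀ r k x, x ∈ posW m hm r k → x.2 = true := by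
  intro r
  induction r with
  | zero => intro k x hx; simp [posW] at hx; rw [hx]
  | succ r ih =>
    intro k x hx
    cases k with
    | zero => simp [posW] at hx; rw [hx]
    | succ k =>
      rw [posW, List.mem_append] at hx
      rcases hx with hx | hx
      · exact ih _ x hx
      · exact ih _ x hx

lemma chain'_of_true {m : ℕ} :
    ∀ (w : FWord m), (∀ x ∈ w, x.2 = true) → w.Chain' R
  | [], _ => List.isChain_nil
  | [x], _ => List.isChain_singleton x
  | x :: y :: t, h => List.isChain_cons_cons.mpr
      ⟨fun _ => by rw [h x (by simp), h y (by simp)],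
        chain'_of_true (y :: t) (fun z hz => h z (by simp [hz]))⟩

lemma sum_choose (r : ℕ) : ∀ k, ∑ j ∈ Finset.range (k + 1), (r + j - 1).choose j
    = (r + k).choose k := by
  intro k
  induction k with
  | zero => simp
  | succ k ih =>
    rw [Finset.sum_range_succ, ih]
    have e1 : r + (k + 1) - 1 = r + k := by omega
    have e2 : r + (k + 1) = (r + k) + 1 := by omega
    rw [e1, e2, Nat.choose_succ_succ]

section EvalLemmas

variable {m : ℕ} (hm : 0 < m) (φ : FreeGroup (Fin m) ≃* FreeGroup (Fin m))

lemma posW_zero (r : ℕ) : posW m hm r 0 = [(gen m hm 0, true)] := by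
  cases r <;> rfl

lemma negW_zero (r : ℕ) : negW m hm r 0 = [(gen m hm 0, true)] := by
  cases r <;> simp [negW]

lemma pow_succ_apply (r : ℕ) (x : FreeGroup (Fin m)) :
    (φ ^ (r + 1)) x = (φ ^ r) (φ x) := by
  rw [pow_succ]; rfl

lemma hφ_zero (hφ : IsHydraAut m φ) : φ (FreeGroup.of (gen m hm 0)) = FreeGroup.of (gen m hm 0) := by
  have := hφ (gen m hm 0)
  rwa [if_pos (gen_val hm hm)] at this

lemma hφ_succ (hφ : IsHydraAut m φ) {k : ℕ} (h : k + 1 < m) :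
    φ (FreeGroup.of (gen m hm (k + 1))) =
      FreeGroup.of (gen m hm (k + 1)) * FreeGroup.of (gen m hm k) := by
  have := hφ (gen m hm (k + 1))
  rw [if_neg (by rw [gen_val hm h]; omega)] at this
  convert this using 3
  apply Fin.ext
  simp [gen_val hm h, gen_val hm (by omega : k < m)]

lemma posW_eval (hφ : IsHydraAut m φ) : ∀ r k, k < m →
    FreeGroup.mk (posW m hm r k) = (φ ^ r) (FreeGroup.of (gen m hm k)) := by
  intro r
  induction r with
  | zero => intro k _; rw [pow_zero]; rfl
  | succ r ih =>
    intro k hk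
    cases k with
    | zero =>
      rw [pow_succ_apply, hφ_zero hm φ hφ, ← ih 0 hk, posW_zero, posW_zero]
    | succ k =>
      rw [pow_succ_apply, hφ_succ hm φ hφ hk, _root_.map_mul, ← ih (k+1) hk,
        ← ih k (by omega), posW, ← FreeGroup.mul_mk]

lemma hψ_zero (hφ : IsHydraAut m φ) : φ⁻¹ (FreeGroup.of (gen m hm 0)) = FreeGroup.of (gen m hm 0) := by
  have h := hφ_zero hm φ hφ
  have : φ.symm (φ (FreeGroup.of (gen m hm 0))) = φ.symm (FreeGroup.of (gen m hm 0)) :=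
    congrArg _ h
  rw [MulEquiv.symm_apply_apply] at this
  rw [MulAut.inv_def, ← this]

lemma hψ_succ (hφ : IsHydraAut m φ) {k : ℕ} (h : k + 1 < m) :
    φ⁻¹ (FreeGroup.of (gen m hm (k + 1))) =
      FreeGroup.of (gen m hm (k + 1)) * (φ⁻¹ (FreeGroup.of (gen m hm k)))⁻¹ := by
  have h1 := hφ_succ hm φ hφ h
  have h2 : φ.symm (φ (FreeGroup.of (gen m hm (k+1)))) =
      φ.symm (FreeGroup.of (gen m hm (k + 1)) * FreeGroup.of (gen m hm k)) := congrArg _ h1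
  rw [MulEquiv.symm_apply_apply, _root_.map_mul] at h2
  rw [MulAut.inv_def]
  exact eq_mul_inv_of_mul_eq h2.symm

lemma negW_eval (hφ : IsHydraAut m φ) : ∀ r k, k < m →
    FreeGroup.mk (negW m hm r k) = (φ⁻¹ ^ r) (FreeGroup.of (gen m hm k)) := by
  intro r
  induction r with
  | zero => intro k _; rw [pow_zero, MulAut.one_apply, negW]; rfl
  | succ r ih =>
    intro k hk
    induction k with
    | zero =>
      rw [pow_succ_apply, hψ_zero hm φ hφ, ← ih 0 hk, negW_zero, negW_zero]
    | succ k ihk =>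
      rw [pow_succ_apply, hψ_succ hm φ hφ hk, _root_.map_mul, _root_.map_inv,
        ← pow_succ_apply, ← ih (k+1) hk, ← ihk (by omega), negW,
        ← FreeGroup.mul_mk, FreeGroup.inv_mk]

end EvalLemmas

lemma chain'_invRev {m : ℕ} {w : FWord m} (h : w.Chain' R) :
    (FreeGroup.invRev w).Chain' R := by
  unfold FreeGroup.invRev
  unfold List.Chain' at h ⊢
  rw [List.isChain_reverse, List.isChain_map]
  refine h.imp ?_
  intro a b hab h1
  have h2 : a.2 = b.2 := hab ((show b.1 = a.1 from h1).symm)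
  show (b.1, !b.2).2 = (a.1, !a.2).2
  simp only [h2]

lemma invRev_head? {m : ℕ} (w : FWord m) :
    (FreeGroup.invRev w).head? = w.getLast?.map (fun x => (x.1, !x.2)) := by
  unfold FreeGroup.invRev
  rw [List.head?_reverse, List.getLast?_map]

lemma invRev_getLast? {m : ℕ} (w : FWord m) :
    (FreeGroup.invRev w).getLast? = w.head?.map (fun x => (x.1, !x.2)) := by
  unfold FreeGroup.invRev
  rw [List.getLast?_reverse, List.head?_map]

lemma negW_spec {m : ℕ} (hm : 0 < m) :
    ∀ r k, k < m →
      (negW m hm r k).head? = some (gen m hm k, true) ∧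
      (negW m hm r k).getLast? =
        some (if r = 0 ∨ k = 0 then (gen m hm k, true) else (gen m hm (k - 1), false)) ∧
      (negW m hm r k).Chain' R := by
  intro r
  induction r with
  | zero =>
    intro k _
    refine ⟨by simp [negW], by simp [negW], by simp [negW]; exact List.isChain_singleton _⟩
  | succ r ih =>
    intro k hk
    induction k with
    | zero =>
      rw [negW_zero' hm]
      exact ⟨rfl, by simp, List.isChain_singleton _⟩
    | succ k ihk =>
      have hk' : k < m := by omega
      obtain ⟨hA1, hA2, hA3⟩ := ih (k + 1) hk
      obtain ⟨hB1, hB2, hB3⟩ := ihk hk'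
      have hAne : negW m hm r (k + 1) ≠ [] := by
        intro h; rw [h] at hA1; simp at hA1
      have hBne : FreeGroup.invRev (negW m hm (r + 1) k) ≠ [] := by
        intro h
        have := congrArg List.length h
        rw [FreeGroup.invRev_length] at this
        have h2 := hB1
        rw [List.eq_nil_of_length_eq_zero this] at h2
        simp at h2
      rw [negW]
      refine ⟨?_, ?_, ?_⟩
      · rw [List.head?_append, hA1]
        rfl
      · rw [List.getLast?_append, invRev_getLast?, hB1]
        simp
      · rw [List.Chain', List.isChain_append]
        refine ⟨hA3, chain'_invRev hB3, ?_⟩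
        intro x hx y hy
        rw [hA2] at hx
        rw [invRev_head?, hB2] at hy
        simp only [Option.mem_def, Option.some.injEq, Option.map_some] at hx hy
        rcases Nat.eq_zero_or_pos r with hr | hr <;>
          rcases Nat.eq_zero_or_pos k with hk0 | hk0
        · subst hr; subst hk0
          simp at hx hy
          subst hx; subst hy
          intro h
          exact absurd h (gen_ne hm hk (by omega) (by omega))
        · subst hr
          simp [hk0.ne'] at hx hy
          subst hx; subst hy
          intro h
          rfl
        · subst hk0
          simp [hr.ne'] at hx hy
          subst hx; subst hy
          intro h
          rfl
        · simp [hr.ne', hk0.ne'] at hx hy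
          subst hx; subst hy
          intro h
          exact absurd h (gen_ne hm (by omega) (by omega) (by omega))


end HydraAux

/-- for `2 ≤ i ≤ m` and `r > 0`,
`|φ^r(aᵢ)|_F = Σ_{j=0}^{i-1} C(r, j)` and `|φ^{-r}(aᵢ)|_F = Σ_{j=0}^{i-1} C(r+j-1, j)`. -/
theorem stmt_8 (m : ℕ) (hm : 2 ≤ m)
    (φ : FreeGroup (Fin m) ≃* FreeGroup (Fin m)) (hφ : IsHydraAut m φ)
    (i : ℕ) (hi : 2 ≤ i) (him : i ≤ m) (r : ℕ) (hr : 0 < r) :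
    lenF ((φ ^ (r : ℤ)) (FreeGroup.of (⟨i - 1, by omega⟩ : Fin m))) =
      ∑ j ∈ Finset.range i, r.choose j ∧
    lenF ((φ ^ (-(r : ℤ))) (FreeGroup.of (⟨i - 1, by omega⟩ : Fin m))) =
      ∑ j ∈ Finset.range i, (r + j - 1).choose j := by
  have hm0 : 0 < m := by omega
  have hkm : i - 1 < m := by omega
  have hfin : (⟨i - 1, by omega⟩ : Fin m) = HydraAux.gen m hm0 (i - 1) :=
    Fin.ext (by rw [HydraAux.gen_val hm0 hkm])
  have hrange : Finset.range i = Finset.range ((i - 1) + 1) := by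
    congr 1
    omega
  constructor
  · rw [hfin, show (φ ^ (r : ℤ)) = φ ^ r from zpow_natCast φ r,
      ← HydraAux.posW_eval hm0 φ hφ r (i - 1) hkm,
      HydraAux.lenF_mk_of_reduced _
        (HydraAux.reduce_eq_self_of_chain _
          (HydraAux.chain'_of_true _ (HydraAux.posW_true hm0 r (i - 1)))),
      HydraAux.posW_length, hrange]
  · rw [hfin, show (φ ^ (-(r : ℤ))) = φ⁻¹ ^ r from by
        rw [zpow_neg, zpow_natCast, inv_pow],
      ← HydraAux.negW_eval hm0 φ hφ r (i - 1) hkm,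
      HydraAux.lenF_mk_of_reduced _
        (HydraAux.reduce_eq_self_of_chain _
          ((HydraAux.negW_spec hm0 r (i - 1) hkm).2.2)),
      HydraAux.negW_length, hrange, HydraAux.sum_choose]
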